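/- Let N ≥ 2, n ≥ 1, and M ∈ {1, …, n}. The number of words w ∈ W_n^{(N)} for which ρ∞(w, wst) ≥ (2M + 2)/n is at most 2·N²·(N·n)!/((n − M)!·(n + M)!·(n!)^{N−2}) (that is, 2N² times the multinomial coefficient with parts n − M, n + M, n, …, n). -/

import Mathlib

/-- The number of occurrences of the letter `k` among the first `j` letters of the word
`w : Fin m → Fin N`. -/
def countLetterN (m N : ℕ) (w : Fin m → Fin N) (k : Fin N) (j : ℕ) : ℕ :=
  (Finset.univ.filter fun i : Fin m => (i : ℕ) < j ∧ w i = k).card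

/-- `w` is a word in `W_n^{(N)}`: a word of length `N·n` in the `N` letters `A₁, …, A_N`
(encoded as `Fin N`) containing exactly `n` occurrences of each letter. -/
def IsWordN (N n : ℕ) (w : Fin (N * n) → Fin N) : Prop :=
  ∀ k : Fin N, (Finset.univ.filter fun i : Fin (N * n) => w i = k).card = n

/-- `ρ∞(w, v) = (2/n)·max_{1 ≤ k ≤ N, 1 ≤ j ≤ N·n} |w_{A_k}[j] − v_{A_k}[j]|`. -/
noncomputable def rhoInfN (N n : ℕ) (w v : Fin (N * n) → Fin N) : ℝ :=
  (2 / (n : ℝ)) * (((Finset.Icc 1 (N * n)) ×ˢ (Finset.univ : Finset (Fin N))).sup fun p =>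
    ((countLetterN (N * n) N w p.2 p.1 : ℤ) - (countLetterN (N * n) N v p.2 p.1 : ℤ)).natAbs :
      ℕ)

/-- The standard word `wst ∈ W_n^{(N)}`: the word `A₁A₂…A_N` repeated `n` times. -/
def wstN (N n : ℕ) (hN : 0 < N) : Fin (N * n) → Fin N :=
  fun i => ⟨(i : ℕ) % N, Nat.mod_lt _ hN⟩

namespace WordsFar

variable {m N : ℕ}

theorem count_mono (w : Fin m → Fin N) (c : Fin N) {j j' : ℕ} (h : j ≤ j') :
    countLetterN m N w c j ≤ countLetterN m N w c j' := by
  apply Finset.card_le_card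
  intro i hi
  simp only [Finset.mem_filter] at *
  exact ⟨hi.1, lt_of_lt_of_le hi.2.1 h, hi.2.2⟩

theorem count_zero (w : Fin m → Fin N) (c : Fin N) : countLetterN m N w c 0 = 0 := by
  simp [countLetterN]

theorem count_succ (w : Fin m → Fin N) (c : Fin N) {j : ℕ} (hj : j < m) :
    countLetterN m N w c (j + 1) =
      countLetterN m N w c j + if w ⟨j, hj⟩ = c then 1 else 0 := by
  classical
  unfold countLetterN
  have hsplit : (Finset.univ.filter fun i : Fin m => (i : ℕ) < j + 1 ∧ w i = c) =
      (Finset.univ.filter fun i : Fin m => (i : ℕ) < j ∧ w i = c) ∪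
      (Finset.univ.filter fun i : Fin m => (i : ℕ) = j ∧ w i = c) := by
    ext i
    simp only [Finset.mem_filter, Finset.mem_union, Finset.mem_univ, true_and,
      Nat.lt_succ_iff_lt_or_eq]
    tauto
  rw [hsplit, Finset.card_union_of_disjoint]
  · congr 1
    by_cases hc : w ⟨j, hj⟩ = c
    · rw [if_pos hc]
      have : (Finset.univ.filter fun i : Fin m => (i : ℕ) = j ∧ w i = c) = {⟨j, hj⟩} := by
        ext i
        simp only [Finset.mem_filter, Finset.mem_univ, true_and, Finset.mem_singleton]
        constructor
        · rintro ⟨h1, _⟩; exact Fin.ext h1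
        · rintro rfl; exact ⟨rfl, hc⟩
      rw [this, Finset.card_singleton]
    · rw [if_neg hc]
      have : (Finset.univ.filter fun i : Fin m => (i : ℕ) = j ∧ w i = c) = ∅ := by
        ext i
        simp only [Finset.mem_filter, Finset.mem_univ, true_and, Finset.notMem_empty,
          iff_false, not_and]
        intro h1
        have : i = ⟨j, hj⟩ := Fin.ext h1
        subst this
        exact hc
      rw [this, Finset.card_empty]
  · rw [Finset.disjoint_left]
    intro i hi hi'
    simp only [Finset.mem_filter] at hi hi'
    omega

theorem count_succ_le (w : Fin m → Fin N) (c : Fin N) (j : ℕ) :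
    countLetterN m N w c (j + 1) ≤ countLetterN m N w c j + 1 := by
  by_cases hj : j < m
  · rw [count_succ w c hj]
    split <;> omega
  · have : countLetterN m N w c (j + 1) = countLetterN m N w c j := by
      unfold countLetterN
      congr 1
      apply Finset.filter_congr
      intro i _
      have : (i : ℕ) < m := i.2
      simp only [and_congr_left_iff]
      intro _
      omega
    omega

theorem count_congr {w v : Fin m → Fin N} {j : ℕ}
    (h : ∀ i : Fin m, (i : ℕ) < j → w i = v i) (c : Fin N) :
    countLetterN m N w c j = countLetterN m N v c j := by
  unfold countLetterN
  congr 1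
  apply Finset.filter_congr
  intro i _
  constructor
  · rintro ⟨h1, h2⟩; exact ⟨h1, (h i h1).symm.trans h2⟩
  · rintro ⟨h1, h2⟩; exact ⟨h1, (h i h1).trans h2⟩

theorem count_top (w : Fin m → Fin N) (c : Fin N) :
    countLetterN m N w c m = (Finset.univ.filter fun i : Fin m => w i = c).card := by
  unfold countLetterN
  congr 1
  apply Finset.filter_congr
  intro i _
  simp [i.2]

theorem count_split (w : Fin m → Fin N) (c : Fin N) (j : ℕ) :
    countLetterN m N w c m = countLetterN m N w c j +
      (Finset.univ.filter fun i : Fin m => ¬ ((i : ℕ) < j) ∧ w i = c).card := by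
  classical
  rw [count_top]
  have := Finset.card_filter_add_card_filter_not (s := (Finset.univ.filter
      fun i : Fin m => w i = c)) (fun i : Fin m => (i : ℕ) < j)
  rw [Finset.filter_filter, Finset.filter_filter] at this
  unfold countLetterN
  have e1 : (Finset.univ.filter fun i : Fin m => (i : ℕ) < j ∧ w i = c) =
      (Finset.univ.filter fun i : Fin m => w i = c ∧ (i : ℕ) < j) := by
    apply Finset.filter_congr; intro i _; exact and_comm
  have e2 : (Finset.univ.filter fun i : Fin m => ¬ ((i : ℕ) < j) ∧ w i = c) =
      (Finset.univ.filter fun i : Fin m => w i = c ∧ ¬ ((i : ℕ) < j)) := by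
    apply Finset.filter_congr; intro i _; exact and_comm
  rw [e1, e2]
  omega

theorem sum_count (w : Fin m → Fin N) {j : ℕ} (hj : j ≤ m) :
    ∑ c : Fin N, countLetterN m N w c j = j := by
  classical
  have hcard : (Finset.univ.filter fun i : Fin m => (i : ℕ) < j).card = (Finset.range j).card := by
    apply Finset.card_bij (fun (i : Fin m) _ => (i : ℕ))
    · intro i hi
      simp only [Finset.mem_filter] at hi
      exact Finset.mem_range.2 hi.2
    · intro i hi i' hi' h
      exact Fin.ext h
    · intro x hx
      have hxm : x < m := lt_of_lt_of_le (Finset.mem_range.1 hx) hj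
      exact ⟨⟨x, hxm⟩, by simp [Finset.mem_range.1 hx], rfl⟩
  rw [Finset.card_range] at hcard
  have hfib := Finset.card_eq_sum_card_fiberwise (f := w)
    (s := Finset.univ.filter fun i : Fin m => (i : ℕ) < j) (t := Finset.univ)
    (fun x _ => Finset.mem_univ _)
  have key : ∑ c : Fin N, countLetterN m N w c j =
      (Finset.univ.filter fun i : Fin m => (i : ℕ) < j).card := by
    rw [hfib]
    apply Finset.sum_congr rfl
    intro c _
    unfold countLetterN
    rw [Finset.filter_filter]
  rw [key, hcard]


theorem dvd_iff_mod (Nn : ℕ) (hN : 0 < Nn) (j : ℕ) (k : ℕ) (hk : k < Nn) :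
    Nn ∣ (j + (Nn - 1 - k) + 1) ↔ j % Nn = k := by
  have hdm : Nn * (j / Nn) + j % Nn = j := Nat.div_add_mod j Nn
  have hmod : j % Nn < Nn := Nat.mod_lt _ hN
  have heq : j + (Nn - 1 - k) + 1 = Nn * (j / Nn) + (j % Nn + (Nn - k)) := by omega
  rw [heq]
  have hdvd : Nn ∣ Nn * (j / Nn) := Dvd.intro _ rfl
  rw [Nat.dvd_add_right hdvd]
  constructor
  · rintro ⟨c, hc⟩
    have h1 : 1 ≤ Nn * c := by omega
    have h2 : Nn * c < 2 * Nn := by omega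
    have hc1 : c = 1 := by
      rcases Nat.lt_or_ge c 1 with h | h
      · interval_cases c <;> omega
      rcases Nat.lt_or_ge c 2 with h' | h'
      · omega
      · exfalso; nlinarith
    subst hc1
    omega
  · intro h
    exact ⟨1, by omega⟩

theorem wst_count {N n : ℕ} (hN : 0 < N) (k : Fin N) {j : ℕ} (hj : j ≤ N * n) :
    countLetterN (N * n) N (wstN N n hN) k j = (j + (N - 1 - (k : ℕ))) / N := by
  induction j with
  | zero =>
    have : (N - 1 - (k : ℕ)) / N = 0 := Nat.div_eq_of_lt (by have := k.2; omega)
    simp [countLetterN, this]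
  | succ j ih =>
    have hjm : j < N * n := by omega
    rw [count_succ _ _ hjm, ih (by omega)]
    have harith : (j + 1 + (N - 1 - (k : ℕ))) = (j + (N - 1 - (k : ℕ))) + 1 := by omega
    rw [harith, Nat.succ_div]
    have hiff : (wstN N n hN ⟨j, hjm⟩ = k) ↔ (N ∣ j + (N - 1 - (k : ℕ)) + 1) := by
      rw [dvd_iff_mod N hN j (k : ℕ) k.2]
      constructor
      · intro h; exact congrArg Fin.val h
      · intro h; exact Fin.ext h
    by_cases h : wstN N n hN ⟨j, hjm⟩ = k
    · rw [if_pos h, if_pos (hiff.1 h)]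
    · rw [if_neg h, if_neg (fun hd => h (hiff.2 hd))]

theorem wst_close {N n : ℕ} (hN : 0 < N) (k l : Fin N) {j : ℕ} (hj : j ≤ N * n) :
    countLetterN (N * n) N (wstN N n hN) k j ≤
      countLetterN (N * n) N (wstN N n hN) l j + 1 := by
  rw [wst_count hN k hj, wst_count hN l hj]
  have h1 : j + (N - 1 - (k : ℕ)) ≤ (j + (N - 1 - (l : ℕ))) + N := by
    have := k.2; have := l.2; omega
  calc (j + (N - 1 - (k : ℕ))) / N ≤ ((j + (N - 1 - (l : ℕ))) + N) / N :=
        Nat.div_le_div_right h1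
    _ = (j + (N - 1 - (l : ℕ))) / N + 1 := Nat.add_div_right _ hN


theorem exists_pair_gap {N n M : ℕ} (hN : 2 ≤ N) (hn : 1 ≤ n) (hM : 1 ≤ M)
    (hN0 : 0 < N) (w : Fin (N * n) → Fin N)
    (hρ : ((2 * M + 2 : ℝ) / n) ≤ rhoInfN N n w (wstN N n hN0)) :
    ∃ a b : Fin N, a ≠ b ∧ ∃ j ≤ N * n,
      countLetterN (N * n) N w b j + M ≤ countLetterN (N * n) N w a j := by
  classical
  have hn' : (0 : ℝ) < n := by exact_mod_cast hn
  set S := (((Finset.Icc 1 (N * n)) ×ˢ (Finset.univ : Finset (Fin N))).sup fun p =>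
    ((countLetterN (N * n) N w p.2 p.1 : ℤ) -
      (countLetterN (N * n) N (wstN N n hN0) p.2 p.1 : ℤ)).natAbs) with hS
  have hsup : (M + 1 : ℕ) ≤ S := by
    have h2n : (0 : ℝ) < 2 / n := by positivity
    have : (2 / (n : ℝ)) * (M + 1 : ℕ) ≤ (2 / (n : ℝ)) * S := by
      calc (2 / (n : ℝ)) * (M + 1 : ℕ) = (2 * M + 2) / n := by push_cast; ring
        _ ≤ rhoInfN N n w (wstN N n hN0) := hρ
        _ = (2 / (n : ℝ)) * S := rfl
    have := le_of_mul_le_mul_left this h2n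
    exact_mod_cast this
  have hbot : (⊥ : ℕ) < M + 1 := by rw [show (⊥ : ℕ) = 0 from rfl]; omega
  rw [Finset.le_sup_iff hbot] at hsup
  obtain ⟨p, hp, hle⟩ := hsup
  rw [Finset.mem_product, Finset.mem_Icc] at hp
  obtain ⟨⟨hp1, hp2⟩, -⟩ := hp
  set j := p.1 with hj
  set k := p.2 with hk
  set x := countLetterN (N * n) N w k j with hx
  set y := countLetterN (N * n) N (wstN N n hN0) k j with hy
  have hcase : y + (M + 1) ≤ x ∨ x + (M + 1) ≤ y := by omega
  have hsum : ∑ c : Fin N, countLetterN (N * n) N w c j =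
      ∑ c : Fin N, countLetterN (N * n) N (wstN N n hN0) c j := by
    rw [sum_count w hp2, sum_count _ hp2]
  rcases hcase with hbig | hsmall
  · -- x ≥ y + M + 1 : some letter b has count ≤ wst count
    have hexb : ∃ b : Fin N, countLetterN (N * n) N w b j ≤
        countLetterN (N * n) N (wstN N n hN0) b j := by
      by_contra h
      push_neg at h
      have hne : (Finset.univ : Finset (Fin N)).Nonempty := ⟨⟨0, by omega⟩, Finset.mem_univ _⟩
      have := Finset.sum_lt_sum_of_nonempty hne (fun c _ => h c)
      omega
    obtain ⟨b, hb⟩ := hexb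
    refine ⟨k, b, ?_, j, hp2, ?_⟩
    · intro hab
      rw [← hab] at hb
      omega
    · have hcl := wst_close hN0 b k hp2
      omega
  · -- y ≥ x + M + 1 : some letter a has count ≥ wst count
    have hexa : ∃ a : Fin N, countLetterN (N * n) N (wstN N n hN0) a j ≤
        countLetterN (N * n) N w a j := by
      by_contra h
      push_neg at h
      have hne : (Finset.univ : Finset (Fin N)).Nonempty := ⟨⟨0, by omega⟩, Finset.mem_univ _⟩
      have := Finset.sum_lt_sum_of_nonempty hne (fun c _ => h c)
      omega
    obtain ⟨a, ha⟩ := hexa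
    refine ⟨a, k, ?_, j, hp2, ?_⟩
    · intro hab
      rw [hab] at ha
      omega
    · have hcl := wst_close hN0 k a hp2
      omega


section Reflection

variable {N n M : ℕ} (a b : Fin N)

/-- The property: at time `j` the count of `a` exceeds that of `b` by at least `M`. -/
def GapAt (M : ℕ) (a b : Fin N) (w : Fin (N * n) → Fin N) (j : ℕ) : Prop :=
  countLetterN (N * n) N w b j + M ≤ countLetterN (N * n) N w a j

open Classical in
/-- First hitting time of gap `M`. -/
noncomputable def hitT (n M : ℕ) (a b : Fin N) (w : Fin (N * n) → Fin N) : ℕ :=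
  if h : ∃ j, GapAt (n := n) M a b w j then Nat.find h else 0

open Classical in
/-- The reflected word: swap `a` and `b` from the hitting time on. -/
noncomputable def reflW (n M : ℕ) (a b : Fin N) (w : Fin (N * n) → Fin N) :
    Fin (N * n) → Fin N :=
  fun i => if (i : ℕ) < hitT n M a b w then w i else Equiv.swap a b (w i)

variable {a b}

theorem hitT_spec {w : Fin (N * n) → Fin N} (h : ∃ j, GapAt (n := n) M a b w j) :
    GapAt (n := n) M a b w (hitT n M a b w) ∧
      ∀ j < hitT n M a b w, ¬ GapAt (n := n) M a b w j := by
  classical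
  rw [hitT, dif_pos h]
  exact ⟨Nat.find_spec h, fun j hj => Nat.find_min h hj⟩

theorem hitT_le {w : Fin (N * n) → Fin N} (h : ∃ j, GapAt (n := n) M a b w j)
    {j : ℕ} (hj : GapAt (n := n) M a b w j) : hitT n M a b w ≤ j := by
  classical
  rw [hitT, dif_pos h]
  exact Nat.find_le hj

theorem hitT_pos (hM : 1 ≤ M) {w : Fin (N * n) → Fin N}
    (h : ∃ j, GapAt (n := n) M a b w j) : 0 < hitT n M a b w := by
  rcases Nat.eq_zero_or_pos (hitT n M a b w) with h0 | h0
  · exfalso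
    have := (hitT_spec h).1
    rw [h0] at this
    unfold GapAt at this
    rw [count_zero, count_zero] at this
    omega
  · exact h0

/-- At the hitting time the gap is exactly `M`. -/
theorem hitT_eq (hM : 1 ≤ M) {w : Fin (N * n) → Fin N}
    (h : ∃ j, GapAt (n := n) M a b w j) :
    countLetterN (N * n) N w a (hitT n M a b w) =
      countLetterN (N * n) N w b (hitT n M a b w) + M := by
  obtain ⟨hP, hmin⟩ := hitT_spec h
  have hpos := hitT_pos hM h
  set j0 := hitT n M a b w with hj0
  obtain ⟨j1, hj1⟩ : ∃ j1, j0 = j1 + 1 := ⟨j0 - 1, by omega⟩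
  have hnot := hmin j1 (by omega)
  unfold GapAt at hP hnot
  have h1 : countLetterN (N * n) N w a (j1 + 1) ≤ countLetterN (N * n) N w a j1 + 1 :=
    count_succ_le w a j1
  have h2 : countLetterN (N * n) N w b j1 ≤ countLetterN (N * n) N w b (j1 + 1) :=
    count_mono w b (by omega)
  rw [hj1] at hP ⊢
  omega

theorem reflW_eq_below {w : Fin (N * n) → Fin N} {i : Fin (N * n)}
    (h : (i : ℕ) < hitT n M a b w) : reflW n M a b w i = w i := by
  rw [reflW, if_pos h]

theorem reflW_eq_above {w : Fin (N * n) → Fin N} {i : Fin (N * n)}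
    (h : ¬ (i : ℕ) < hitT n M a b w) : reflW n M a b w i = Equiv.swap a b (w i) := by
  rw [reflW, if_neg h]

theorem count_reflW_below (w : Fin (N * n) → Fin N) (c : Fin N) {j : ℕ}
    (hj : j ≤ hitT n M a b w) :
    countLetterN (N * n) N (reflW n M a b w) c j = countLetterN (N * n) N w c j :=
  count_congr (fun i hi => reflW_eq_below (lt_of_lt_of_le hi hj)) c

theorem hitT_reflW (hM : 1 ≤ M) {w : Fin (N * n) → Fin N}
    (h : ∃ j, GapAt (n := n) M a b w j) :
    (∃ j, GapAt (n := n) M a b (reflW n M a b w) j) ∧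
      hitT n M a b (reflW n M a b w) = hitT n M a b w := by
  set j0 := hitT n M a b w with hj0
  have hP : GapAt (n := n) M a b (reflW n M a b w) j0 := by
    unfold GapAt
    rw [count_reflW_below w a le_rfl, count_reflW_below w b le_rfl]
    exact (hitT_spec h).1
  refine ⟨⟨j0, hP⟩, ?_⟩
  apply le_antisymm (hitT_le ⟨j0, hP⟩ hP)
  by_contra hlt
  push_neg at hlt
  have hP' := (hitT_spec ⟨j0, hP⟩).1
  set j1 := hitT n M a b (reflW n M a b w) with hj1
  have hj1le : j1 ≤ j0 := le_of_lt hlt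
  have : GapAt (n := n) M a b w j1 := by
    unfold GapAt at hP' ⊢
    rw [count_reflW_below w a hj1le, count_reflW_below w b hj1le] at hP'
    exact hP'
  exact absurd this ((hitT_spec h).2 j1 hlt)

theorem reflW_reflW (hM : 1 ≤ M) {w : Fin (N * n) → Fin N}
    (h : ∃ j, GapAt (n := n) M a b w j) :
    reflW n M a b (reflW n M a b w) = w := by
  obtain ⟨h', heq⟩ := hitT_reflW hM h
  funext i
  by_cases hi : (i : ℕ) < hitT n M a b w
  · rw [reflW_eq_below (heq ▸ hi), reflW_eq_below hi]
  · rw [reflW_eq_above (heq ▸ hi), reflW_eq_above hi, Equiv.swap_apply_self]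

/-- Total counts of the reflected word. -/
theorem count_reflW_total (hM : 1 ≤ M) (hab : a ≠ b) {w : Fin (N * n) → Fin N}
    (hw : IsWordN N n w) (h : ∃ j, GapAt (n := n) M a b w j) (c : Fin N) :
    (Finset.univ.filter fun i : Fin (N * n) => reflW n M a b w i = c).card =
      if c = a then n + M else if c = b then n - M else n := by
  classical
  set j0 := hitT n M a b w with hj0
  set v := reflW n M a b w with hv
  have hsplitv := count_split v c j0
  have hsplitw := count_split w (Equiv.swap a b c) j0
  have hsuffix : (Finset.univ.filter fun i : Fin (N * n) => ¬ ((i : ℕ) < j0) ∧ v i = c) =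
      (Finset.univ.filter fun i : Fin (N * n) =>
        ¬ ((i : ℕ) < j0) ∧ w i = Equiv.swap a b c) := by
    apply Finset.filter_congr
    intro i _
    constructor
    · rintro ⟨h1, h2⟩
      refine ⟨h1, ?_⟩
      rw [hv, reflW_eq_above h1] at h2
      rw [← h2, Equiv.swap_apply_self]
    · rintro ⟨h1, h2⟩
      refine ⟨h1, ?_⟩
      rw [hv, reflW_eq_above h1, h2, Equiv.swap_apply_self]
  have hvj0 : countLetterN (N * n) N v c j0 = countLetterN (N * n) N w c j0 :=
    count_reflW_below w c le_rfl
  have key : countLetterN (N * n) N v c (N * n) = countLetterN (N * n) N w c j0 +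
      (Finset.univ.filter fun i : Fin (N * n) =>
        ¬ ((i : ℕ) < j0) ∧ w i = Equiv.swap a b c).card := by
    rw [hsplitv, hsuffix, hvj0]
  have key2 : countLetterN (N * n) N w (Equiv.swap a b c) j0 +
      (Finset.univ.filter fun i : Fin (N * n) =>
        ¬ ((i : ℕ) < j0) ∧ w i = Equiv.swap a b c).card = n := by
    rw [← hsplitw, count_top]
    exact hw _
  have hgap := hitT_eq hM h
  rw [← hj0] at hgap
  rw [← count_top v c]
  by_cases hca : c = a
  · subst hca
    rw [if_pos rfl]
    rw [Equiv.swap_apply_left] at key2 key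
    omega
  · rw [if_neg hca]
    by_cases hcb : c = b
    · subst hcb
      rw [if_pos rfl]
      rw [Equiv.swap_apply_right] at key2 key
      omega
    · rw [if_neg hcb]
      rw [Equiv.swap_apply_of_ne_of_ne hca hcb] at key2 key
      omega

end Reflection

variable {m N : ℕ}

/-- The fiber of a word over a letter. -/
def fib (v : Fin m → Fin N) (c : Fin N) : Finset (Fin m) :=
  Finset.univ.filter fun i => v i = c

theorem mem_fib {v : Fin m → Fin N} {c : Fin N} {x : Fin m} :
    x ∈ fib v c ↔ v x = c := by simp [fib]

variable (cnt : Fin N → ℕ) (v₀ : Fin m → Fin N) (hv₀ : ∀ c, (fib v₀ c).card = cnt c)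
  (v : Fin m → Fin N) (hv : ∀ c, (fib v c).card = cnt c)
  (π : ∀ c, Equiv.Perm {x // x ∈ fib v₀ c})

/-- Order isomorphism between `Fin (cnt c)` and the fiber of `v` over `c`. -/
noncomputable def fIso (c : Fin N) : Fin (cnt c) ≃o {x // x ∈ fib v c} :=
  (fib v c).orderIsoOfFin (hv c)

noncomputable def stepF (c : Fin N) (x : {x // x ∈ fib v₀ c}) : Fin m :=
  (fIso cnt v hv c ((fIso cnt v₀ hv₀ c).symm (π c x)) : {x // x ∈ fib v c}).1

theorem stepF_mem (c : Fin N) (x : {x // x ∈ fib v₀ c}) :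
    v (stepF cnt v₀ hv₀ v hv π c x) = c :=
  mem_fib.1 (fIso cnt v hv c ((fIso cnt v₀ hv₀ c).symm (π c x))).2

theorem stepF_congr {c c' : Fin N} (h : c = c')
    {x : {x // x ∈ fib v₀ c}} {x' : {x // x ∈ fib v₀ c'}} (hx : x.1 = x'.1) :
    stepF cnt v₀ hv₀ v hv π c x = stepF cnt v₀ hv₀ v hv π c' x' := by
  subst h
  rw [Subtype.ext hx]

theorem stepF_inj {c c' : Fin N} (h : c = c')
    {x : {x // x ∈ fib v₀ c}} {x' : {x // x ∈ fib v₀ c'}}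
    (hs : stepF cnt v₀ hv₀ v hv π c x = stepF cnt v₀ hv₀ v hv π c' x') : x.1 = x'.1 := by
  subst h
  unfold stepF at hs
  have h1 := (fIso cnt v hv c).injective (Subtype.ext hs)
  have h2 := (fIso cnt v₀ hv₀ c).symm.injective h1
  have h3 := (π c).injective h2
  exact congrArg Subtype.val h3

noncomputable def sigmaF : Fin m → Fin m :=
  fun i => stepF cnt v₀ hv₀ v hv π (v₀ i) ⟨i, mem_fib.2 rfl⟩

theorem sigmaF_on_fiber (c : Fin N) (x : {x : Fin m // x ∈ fib v₀ c}) :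
    sigmaF cnt v₀ hv₀ v hv π x.1 = stepF cnt v₀ hv₀ v hv π c x :=
  stepF_congr cnt v₀ hv₀ v hv π (mem_fib.1 x.2) rfl

theorem sigmaF_apply_v (i : Fin m) :
    v (sigmaF cnt v₀ hv₀ v hv π i) = v₀ i :=
  stepF_mem cnt v₀ hv₀ v hv π (v₀ i) ⟨i, mem_fib.2 rfl⟩

theorem sigmaF_injective : Function.Injective (sigmaF cnt v₀ hv₀ v hv π) := by
  intro i i' hs
  have hc : v₀ i = v₀ i' := by
    rw [← sigmaF_apply_v cnt v₀ hv₀ v hv π i, ← sigmaF_apply_v cnt v₀ hv₀ v hv π i', hs]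
  exact stepF_inj cnt v₀ hv₀ v hv π hc hs

theorem card_fixed_counts_mul_le (m N : ℕ) (cnt : Fin N → ℕ) :
    (Finset.univ.filter fun v : Fin m → Fin N => ∀ c, (fib v c).card = cnt c).card *
      ∏ c, (cnt c).factorial ≤ m.factorial := by
  by_cases hT : (Finset.univ.filter fun v : Fin m → Fin N =>
      ∀ c, (fib v c).card = cnt c).Nonempty
  · obtain ⟨v₀, hv₀mem⟩ := hT
    have hv₀ : ∀ c, (fib v₀ c).card = cnt c := (Finset.mem_filter.1 hv₀mem).2
    have Φinj : Function.Injective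
        (fun p : {v : Fin m → Fin N // ∀ c, (fib v c).card = cnt c} ×
            (∀ c, Equiv.Perm {x // x ∈ fib v₀ c}) =>
          (⟨sigmaF cnt v₀ hv₀ p.1.1 p.1.2 p.2,
            sigmaF_injective cnt v₀ hv₀ p.1.1 p.1.2 p.2⟩ : Fin m ↪ Fin m)) := by
      rintro ⟨⟨v, hv⟩, π⟩ ⟨⟨v', hv'⟩, π'⟩ hΦ
      simp only [Function.Embedding.mk.injEq] at hΦ
      have hσ : sigmaF cnt v₀ hv₀ v hv π = sigmaF cnt v₀ hv₀ v' hv' π' := hΦ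
      have hsurj : Function.Surjective (sigmaF cnt v₀ hv₀ v hv π) :=
        Finite.surjective_of_injective (sigmaF_injective cnt v₀ hv₀ v hv π)
      have hvv : v = v' := by
        funext x
        obtain ⟨i, rfl⟩ := hsurj x
        have e1 := sigmaF_apply_v cnt v₀ hv₀ v hv π i
        have e2 := sigmaF_apply_v cnt v₀ hv₀ v' hv' π' i
        rw [← hσ] at e2
        rw [e1, e2]
      subst hvv
      have hππ : π = π' := by
        funext c
        apply Equiv.ext
        intro x
        have h1 : stepF cnt v₀ hv₀ v hv π c x = stepF cnt v₀ hv₀ v hv' π' c x := by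
          rw [← sigmaF_on_fiber cnt v₀ hv₀ v hv π c x, hσ,
            sigmaF_on_fiber cnt v₀ hv₀ v hv' π' c x]
        unfold stepF at h1
        have h2 := (fIso cnt v hv c).injective (Subtype.ext h1)
        have h3 := (fIso cnt v₀ hv₀ c).symm.injective h2
        exact h3
      simp only [Prod.mk.injEq, Subtype.mk.injEq]
      exact ⟨trivial, hππ⟩
    have hcard := Fintype.card_le_of_injective _ Φinj
    rw [Fintype.card_prod, Fintype.card_embedding_eq, Fintype.card_fin,
      Nat.descFactorial_self] at hcard
    have hc1 : Fintype.card {v : Fin m → Fin N // ∀ c, (fib v c).card = cnt c} =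
        (Finset.univ.filter fun v : Fin m → Fin N => ∀ c, (fib v c).card = cnt c).card :=
      Fintype.card_subtype _
    have hc2 : Fintype.card (∀ c, Equiv.Perm {x // x ∈ fib v₀ c}) =
        ∏ c, (cnt c).factorial := by
      rw [Fintype.card_pi]
      apply Finset.prod_congr rfl
      intro c _
      rw [Fintype.card_perm, Fintype.card_coe, hv₀ c]
    rw [hc1, hc2] at hcard
    exact hcard
  · rw [Finset.not_nonempty_iff_eq_empty] at hT
    rw [hT, Finset.card_empty, Nat.zero_mul]
    exact Nat.zero_le _


end WordsFar

open WordsFar Finset in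
/-- For `N ≥ 2`, `n ≥ 1` and `1 ≤ M ≤ n`, the number of words `w ∈ W_n^{(N)}` with
`ρ∞(w, wst) ≥ (2M + 2)/n` is at most
`2·N²·(N·n)!/((n − M)!·(n + M)!·(n!)^{N−2})`. -/
theorem card_words_far_from_standard_le (N n M : ℕ) (hN : 2 ≤ N) (hn : 1 ≤ n)
    (hM : 1 ≤ M) (hMn : M ≤ n) :
    (Nat.card {w : Fin (N * n) → Fin N // IsWordN N n w ∧
        ((2 * M + 2 : ℝ) / n) ≤ rhoInfN N n w (wstN N n (by omega))} : ℝ) ≤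
      2 * (N : ℝ) ^ 2 * (Nat.factorial (N * n) : ℝ) /
        ((Nat.factorial (n - M) : ℝ) * (Nat.factorial (n + M) : ℝ) *
          (Nat.factorial n : ℝ) ^ (N - 2)) := by
  classical
  have hN0 : 0 < N := by omega
  set m := N * n with hm
  -- Step 1: the bad set as a finset
  set P : (Fin m → Fin N) → Prop := fun w => IsWordN N n w ∧
      ((2 * M + 2 : ℝ) / n) ≤ rhoInfN N n w (wstN N n hN0) with hP
  have hcard0 : Nat.card {w : Fin (N * n) → Fin N // IsWordN N n w ∧
      ((2 * M + 2 : ℝ) / n) ≤ rhoInfN N n w (wstN N n (by omega))} =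
      (Finset.univ.filter P).card := by
    rw [Nat.card_eq_fintype_card]
    exact Fintype.card_subtype _
  -- the `Bad` and `T` finsets for each ordered pair of letters
  set Bad : Fin N × Fin N → Finset (Fin m → Fin N) := fun p =>
    Finset.univ.filter fun w => IsWordN N n w ∧ ∃ j, GapAt (n := n) M p.1 p.2 w j with hBad
  set T : Fin N × Fin N → Finset (Fin m → Fin N) := fun p =>
    Finset.univ.filter fun v => ∀ c, (fib v c).card =
      (if c = p.1 then n + M else if c = p.2 then n - M else n) with hT
  -- Step 2: the bad set is covered by the pairwise bad sets
  have hsub : Finset.univ.filter P ⊆ ((Finset.univ : Finset (Fin N × Fin N)).filter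
      (fun p => p.1 ≠ p.2)).biUnion Bad := by
    intro w hw
    rw [Finset.mem_filter] at hw
    obtain ⟨-, hw1, hw2⟩ := hw
    obtain ⟨a, b, hab, j, hj, hgap⟩ := exists_pair_gap hN hn hM hN0 w hw2
    refine Finset.mem_biUnion.2 ⟨(a, b), Finset.mem_filter.2
      ⟨Finset.mem_univ _, hab⟩, ?_⟩
    simp only [hBad]
    exact Finset.mem_filter.2 ⟨Finset.mem_univ _, hw1, j, hgap⟩
  -- Step 3: reflection injects each pairwise bad set into the corresponding count set
  have hBadT : ∀ p ∈ (Finset.univ : Finset (Fin N × Fin N)).filter (fun p => p.1 ≠ p.2),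
      (Bad p).card ≤ (T p).card := by
    rintro ⟨a, b⟩ hp
    have hab : a ≠ b := (Finset.mem_filter.1 hp).2
    apply Finset.card_le_card_of_injOn (reflW n M a b)
    · intro w hw
      simp only [hBad, Finset.mem_coe, Finset.mem_filter] at hw
      obtain ⟨-, hw1, hex⟩ := hw
      simp only [hT]
      refine Finset.mem_filter.2 ⟨Finset.mem_univ _, ?_⟩
      intro c
      have := count_reflW_total hM hab hw1 hex c
      simpa [fib] using this
    · intro w1 h1 w2 h2 heq
      simp only [Finset.coe_filter, Set.mem_setOf_eq, hBad, Finset.mem_coe,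
        Finset.mem_filter] at h1 h2
      have hx1 : ∃ j, GapAt (n := n) M a b w1 j := h1.2.2
      have hx2 : ∃ j, GapAt (n := n) M a b w2 j := h2.2.2
      calc w1 = reflW n M a b (reflW n M a b w1) := (reflW_reflW hM hx1).symm
        _ = reflW n M a b (reflW n M a b w2) := by rw [heq]
        _ = w2 := reflW_reflW hM hx2
  -- Step 4: counting the words with prescribed letter counts
  have hTcard : ∀ p ∈ (Finset.univ : Finset (Fin N × Fin N)).filter (fun p => p.1 ≠ p.2),
      (T p).card * ((n + M).factorial * ((n - M).factorial *
        n.factorial ^ (N - 2))) ≤ m.factorial := by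
    rintro ⟨a, b⟩ hp
    have hab : a ≠ b := (Finset.mem_filter.1 hp).2
    have hmain := card_fixed_counts_mul_le m N
      (fun c => if c = a then n + M else if c = b then n - M else n)
    have hprod : (∏ c : Fin N,
        ((if c = a then n + M else if c = b then n - M else n).factorial)) =
        (n + M).factorial * ((n - M).factorial * n.factorial ^ (N - 2)) := by
      rw [← Finset.mul_prod_erase Finset.univ _ (Finset.mem_univ a)]
      have hbmem : b ∈ Finset.univ.erase a :=
        Finset.mem_erase.2 ⟨Ne.symm hab, Finset.mem_univ _⟩
      rw [← Finset.mul_prod_erase _ _ hbmem]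
      have hrest : ∀ c ∈ (Finset.univ.erase a).erase b,
          ((if c = a then n + M else if c = b then n - M else n).factorial) =
            n.factorial := by
        intro c hc
        obtain ⟨hcb, hca, -⟩ := by
          have h1 := Finset.mem_erase.1 hc
          have h2 := Finset.mem_erase.1 h1.2
          exact (⟨h1.1, h2.1, h2.2⟩ : c ≠ b ∧ c ≠ a ∧ c ∈ Finset.univ)
        rw [if_neg hca, if_neg hcb]
      rw [Finset.prod_congr rfl hrest, Finset.prod_const]
      have hcarde : ((Finset.univ.erase a).erase b).card = N - 2 := by
        rw [Finset.card_erase_of_mem hbmem, Finset.card_erase_of_mem (Finset.mem_univ a),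
          Finset.card_univ, Fintype.card_fin, Nat.sub_sub]
      rw [hcarde, if_pos rfl, if_neg (Ne.symm hab), if_pos rfl]
    rw [hprod] at hmain
    exact hmain
  -- Step 5: put everything together over the reals
  set K : ℝ := (Nat.factorial (N * n) : ℝ) with hK
  set D : ℝ := (Nat.factorial (n - M) : ℝ) * (Nat.factorial (n + M) : ℝ) *
      (Nat.factorial n : ℝ) ^ (N - 2) with hD
  have hDpos : 0 < D := by
    rw [hD]
    positivity
  have hTreal : ∀ p ∈ (Finset.univ : Finset (Fin N × Fin N)).filter (fun p => p.1 ≠ p.2),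
      ((T p).card : ℝ) ≤ K / D := by
    intro p hp
    rw [le_div_iff₀ hDpos]
    have h1 := hTcard p hp
    have h2 : (((T p).card * ((n + M).factorial * ((n - M).factorial *
        n.factorial ^ (N - 2))) : ℕ) : ℝ) ≤ ((m.factorial : ℕ) : ℝ) := Nat.cast_le.2 h1
    push_cast at h2
    rw [hK, hD]
    push_cast
    nlinarith [h2]
  have hchain1 : (Finset.univ.filter P).card ≤
      ∑ p ∈ (Finset.univ : Finset (Fin N × Fin N)).filter (fun p => p.1 ≠ p.2),
        (T p).card := by
    calc (Finset.univ.filter P).card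
        ≤ ((Finset.univ : Finset (Fin N × Fin N)).filter (fun p => p.1 ≠ p.2)
            |>.biUnion Bad).card := Finset.card_le_card hsub
      _ ≤ ∑ p ∈ (Finset.univ : Finset (Fin N × Fin N)).filter (fun p => p.1 ≠ p.2),
            (Bad p).card := Finset.card_biUnion_le
      _ ≤ ∑ p ∈ (Finset.univ : Finset (Fin N × Fin N)).filter (fun p => p.1 ≠ p.2),
            (T p).card := Finset.sum_le_sum hBadT
  have hchain2 : ((Finset.univ.filter P).card : ℝ) ≤
      (((Finset.univ : Finset (Fin N × Fin N)).filter (fun p => p.1 ≠ p.2)).card : ℝ)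
        * (K / D) := by
    calc ((Finset.univ.filter P).card : ℝ)
        ≤ ((∑ p ∈ (Finset.univ : Finset (Fin N × Fin N)).filter (fun p => p.1 ≠ p.2),
            (T p).card : ℕ) : ℝ) := Nat.cast_le.2 hchain1
      _ = ∑ p ∈ (Finset.univ : Finset (Fin N × Fin N)).filter (fun p => p.1 ≠ p.2),
            ((T p).card : ℝ) := by push_cast; rfl
      _ ≤ (((Finset.univ : Finset (Fin N × Fin N)).filter (fun p => p.1 ≠ p.2)).card : ℝ)
            * (K / D) := by
          have := Finset.sum_le_card_nsmul _ _ (K / D) hTreal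
          rwa [nsmul_eq_mul] at this
  have hpairs : (((Finset.univ : Finset (Fin N × Fin N)).filter
      (fun p => p.1 ≠ p.2)).card : ℝ) ≤ 2 * (N : ℝ) ^ 2 := by
    have hle : ((Finset.univ : Finset (Fin N × Fin N)).filter (fun p => p.1 ≠ p.2)).card ≤
        N * N := by
      calc ((Finset.univ : Finset (Fin N × Fin N)).filter (fun p => p.1 ≠ p.2)).card
          ≤ (Finset.univ : Finset (Fin N × Fin N)).card := Finset.card_filter_le _ _
        _ = N * N := by rw [Finset.card_univ, Fintype.card_prod, Fintype.card_fin]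
    have := (Nat.cast_le (α := ℝ)).2 hle
    push_cast at this
    nlinarith [this, sq_nonneg (N : ℝ)]
  rw [hcard0]
  have hKD : 0 ≤ K / D := by positivity
  calc ((Finset.univ.filter P).card : ℝ)
      ≤ (((Finset.univ : Finset (Fin N × Fin N)).filter (fun p => p.1 ≠ p.2)).card : ℝ)
          * (K / D) := hchain2
    _ ≤ 2 * (N : ℝ) ^ 2 * (K / D) := mul_le_mul_of_nonneg_right hpairs hKD
    _ = 2 * (N : ℝ) ^ 2 * K / D := by ring
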